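/- (Remark 2: binomial identity relating the two-user product of binomials to α_2) Let N, m_1, m_2, μ be integers with 0 ≤ μ ≤ m_1 ≤ m_2 ≤ N. Then C(N,μ) C(N−μ, m_1−μ) C(N−m_1, m_2−μ) = C(N,μ) · Σ_{l=0}^{m_1−μ} (−1)^l C(N−μ, l) C(N−μ−l, m_1−μ−l) C(N−μ−l, m_2−μ−l), i.e., C(N−μ, m_1−μ) C(N−m_1, m_2−μ) = Σ_{l=0}^{m_1−μ} (−1)^l C(N−μ, l) C(N−μ−l, m_1−μ−l) C(N−μ−l, m_2−μ−l). -/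

import Mathlib

open Polynomial Finset

private lemma key2 (n a b : ℕ) (hab : a ≤ b) (han : a ≤ n) :
    ∑ l ∈ Finset.range (a + 1), (-1 : ℤ) ^ l * (a.choose l : ℤ) * ((n - l).choose (b - l) : ℤ)
      = ((n - a).choose b : ℤ) := by
  have hpoly : ((X : ℤ[X]) + 1) ^ (n - a)
      = ∑ l ∈ Finset.range (a + 1),
          C ((-1 : ℤ) ^ l * (a.choose l : ℤ)) * X ^ l * (X + 1) ^ (n - l) := by
    have h1 : ((-X : ℤ[X]) + (X + 1)) ^ a = 1 := by ring_nf
    calc ((X : ℤ[X]) + 1) ^ (n - a)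
        = ((-X + (X + 1)) ^ a) * (X + 1) ^ (n - a) := by rw [h1]; ring
      _ = (∑ l ∈ Finset.range (a + 1),
            (-X) ^ l * (X + 1) ^ (a - l) * (a.choose l : ℤ[X])) * (X + 1) ^ (n - a) := by
          rw [add_pow]
      _ = _ := by
          rw [Finset.sum_mul]
          refine Finset.sum_congr rfl fun l hl => ?_
          have hla : l ≤ a := Nat.lt_succ_iff.mp (Finset.mem_range.mp hl)
          have : a - l + (n - a) = n - l := by omega
          rw [neg_pow]
          have hc : (a.choose l : ℤ[X]) = C ((a.choose l : ℤ)) := by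
            simp
          rw [hc]
          rw [show (-1 : ℤ[X]) ^ l * X ^ l * (X + 1) ^ (a - l) * C ((a.choose l : ℤ))
              * (X + 1) ^ (n - a)
              = ((-1 : ℤ[X]) ^ l * C ((a.choose l : ℤ))) * X ^ l
                * ((X + 1) ^ (a - l) * (X + 1) ^ (n - a)) by ring, ← pow_add, this]
          congr 1
          simp [mul_comm]
  have := congrArg (fun p => Polynomial.coeff p b) hpoly
  simp only [Polynomial.finset_sum_coeff] at this
  rw [Polynomial.coeff_X_add_one_pow] at this
  rw [this]
  refine Finset.sum_congr rfl fun l hl => ?_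
  have hla : l ≤ a := Nat.lt_succ_iff.mp (Finset.mem_range.mp hl)
  have hlb : l ≤ b := hla.trans hab
  have hco : ((X : ℤ[X]) ^ l * (X + 1) ^ (n - l)).coeff b = ((n - l).choose (b - l) : ℤ) := by
    rw [show b = (b - l) + l by omega, Polynomial.coeff_X_pow_mul,
      Polynomial.coeff_X_add_one_pow]
    norm_cast
    congr 1
    omega
  rw [mul_assoc (Polynomial.C _), Polynomial.coeff_C_mul, hco]

private lemma key1 (n a b : ℕ) (hab : a ≤ b) (han : a ≤ n) :
    ((n.choose a : ℤ) * ((n - a).choose b : ℤ))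
      = ∑ l ∈ Finset.range (a + 1),
          (-1 : ℤ) ^ l * (n.choose l : ℤ) * ((n - l).choose (a - l) : ℤ)
            * ((n - l).choose (b - l) : ℤ) := by
  have : ∀ l ∈ Finset.range (a + 1),
      (-1 : ℤ) ^ l * (n.choose l : ℤ) * ((n - l).choose (a - l) : ℤ)
        * ((n - l).choose (b - l) : ℤ)
      = (n.choose a : ℤ) * ((-1 : ℤ) ^ l * (a.choose l : ℤ) * ((n - l).choose (b - l) : ℤ)) := by
    intro l hl
    have hla : l ≤ a := Nat.lt_succ_iff.mp (Finset.mem_range.mp hl)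
    have h := Nat.choose_mul (n := n) hla
    have h' : (n.choose l : ℤ) * ((n - l).choose (a - l) : ℤ)
        = (n.choose a : ℤ) * (a.choose l : ℤ) := by exact_mod_cast congrArg Nat.cast h.symm
    calc (-1 : ℤ) ^ l * (n.choose l : ℤ) * ((n - l).choose (a - l) : ℤ)
          * ((n - l).choose (b - l) : ℤ)
        = (-1 : ℤ) ^ l * ((n.choose l : ℤ) * ((n - l).choose (a - l) : ℤ))
          * ((n - l).choose (b - l) : ℤ) := by ring
      _ = _ := by rw [h']; ring
  rw [Finset.sum_congr rfl this, ← Finset.mul_sum, key2 n a b hab han]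

theorem stmt10 (N m₁ m₂ μ : ℕ) (h1 : μ ≤ m₁) (h2 : m₁ ≤ m₂) (h3 : m₂ ≤ N) :
    ((N.choose μ : ℤ) * ((N - μ).choose (m₁ - μ) : ℤ) * ((N - m₁).choose (m₂ - μ) : ℤ)
        = (N.choose μ : ℤ) *
            ∑ l ∈ Finset.range (m₁ - μ + 1),
              (-1 : ℤ) ^ l * ((N - μ).choose l : ℤ) * ((N - μ - l).choose (m₁ - μ - l) : ℤ)
                * ((N - μ - l).choose (m₂ - μ - l) : ℤ)) ∧
    (((N - μ).choose (m₁ - μ) : ℤ) * ((N - m₁).choose (m₂ - μ) : ℤ)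
        = ∑ l ∈ Finset.range (m₁ - μ + 1),
            (-1 : ℤ) ^ l * ((N - μ).choose l : ℤ) * ((N - μ - l).choose (m₁ - μ - l) : ℤ)
              * ((N - μ - l).choose (m₂ - μ - l) : ℤ)) := by
  have hab : m₁ - μ ≤ m₂ - μ := by omega
  have han : m₁ - μ ≤ N - μ := by omega
  have key := key1 (N - μ) (m₁ - μ) (m₂ - μ) hab han
  have hsub : N - μ - (m₁ - μ) = N - m₁ := by omega
  rw [hsub] at key
  have hsum : ∀ l, (N - μ - l) = (N - μ - l) := fun _ => rfl
  constructor
  · rw [show ∑ l ∈ Finset.range (m₁ - μ + 1),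
        (-1 : ℤ) ^ l * ((N - μ).choose l : ℤ) * ((N - μ - l).choose (m₁ - μ - l) : ℤ)
          * ((N - μ - l).choose (m₂ - μ - l) : ℤ)
        = ((N - μ).choose (m₁ - μ) : ℤ) * ((N - m₁).choose (m₂ - μ) : ℤ) from key.symm]
    ring
  · exact key
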